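/- Let M be a free abelian group of finite rank, V and W subgroups of M, and φ : V → W a group isomorphism. For an element x of M, the following are equivalent: (i) there exists a positive integer p such that for every k ∈ ℕ the k-th iterate of φ^{-1} is defined at p·x (i.e. p·x ∈ W_k where W_k = { w ∈ W : φ^{-j}(w) ∈ W for all 0 ≤ j < k }); (ii) there exists a ℚ-subspace D_x of D_φ containing the image of x, with φ̃(D_x) = D_x, such that the minimal polynomial of the restriction of φ̃^{-1} to D_x is a monic polynomial with integer coefficients. -/

import Mathlib

/-!
Setting: `M = ℤ^n` is a free abelian group of finite rank, `V, W` are subgroups of `M`,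
and `φ : V ≃+ W` is a group isomorphism.  Inside `M ⊗ ℚ = ℚ^n`, a subgroup `U` of `M`
is identified with the `ℚ`-subspace `U ⊗ ℚ` spanned by its image, and `φ_ℚ` denotes the
unique `ℚ`-linear extension of `φ` to `V ⊗ ℚ`.
-/

/-- The canonical embedding of `ℤ^n` into `ℚ^n` (i.e. `M → M ⊗ ℚ`). -/
def embQ (n : ℕ) (x : Fin n → ℤ) : Fin n → ℚ := fun i => (x i : ℚ)

/-- `U ⊗ ℚ`, the `ℚ`-subspace of `ℚ^n` spanned by the image of a subgroup `U` of `ℤ^n`. -/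
def qSpan (n : ℕ) (U : AddSubgroup (Fin n → ℤ)) : Submodule ℚ (Fin n → ℚ) :=
  Submodule.span ℚ (embQ n '' (U : Set (Fin n → ℤ)))

/-- `RelQ V W φ x y` expresses that `x ∈ V ⊗ ℚ` and `φ_ℚ (x) = y`, where `φ_ℚ` is the
unique `ℚ`-linear extension of `φ : V ≃+ W`: there is a nonzero integer `p` clearing the
denominators of `x`, with `p • x ∈ V` and `φ (p • x) = p • y`. -/
def RelQ {n : ℕ} (V W : AddSubgroup (Fin n → ℤ)) (φ : V ≃+ W)
    (x y : Fin n → ℚ) : Prop :=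
  ∃ p : ℤ, p ≠ 0 ∧ ∃ v : V, embQ n (v : Fin n → ℤ) = p • x ∧
    embQ n ((φ v : W) : Fin n → ℤ) = p • y

/-- `D_φ`: the set of `x ∈ (V ∩ W) ⊗ ℚ` admitting a full backward orbit
`(x_k)_{k ≥ 0}` under `φ_ℚ` inside `(V ∩ W) ⊗ ℚ`, i.e. `x_0 = x` and
`φ_ℚ (x_{k+1}) = x_k` for all `k`. -/
def DSet {n : ℕ} (V W : AddSubgroup (Fin n → ℤ)) (φ : V ≃+ W) : Set (Fin n → ℚ) :=
  {x | ∃ xs : ℕ → (Fin n → ℚ), xs 0 = x ∧ (∀ k, xs k ∈ qSpan n (V ⊓ W)) ∧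
      ∀ k, RelQ V W φ (xs (k + 1)) (xs k)}


/-- `IntRel V W φ v w`: `v ∈ V` and `φ (v) = w` (as elements of `M = ℤ^n`). -/
def IntRel {n : ℕ} (V W : AddSubgroup (Fin n → ℤ)) (φ : V ≃+ W)
    (v w : Fin n → ℤ) : Prop :=
  ∃ hv : v ∈ V, ((φ ⟨v, hv⟩ : W) : Fin n → ℤ) = w

/-- `IntRelIter V W φ k v w`: the `k`-th iterate of `φ` is defined at `v` (i.e. `v ∈ V_k`,
that is `φ^j (v) ∈ V` for all `0 ≤ j < k`) and `φ^k (v) = w`.  In particular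
`V_k = {v | ∃ w, IntRelIter V W φ k v w}` and `W_k = φ^k (V_k) = {w | ∃ v, IntRelIter V W φ k v w}`. -/
def IntRelIter {n : ℕ} (V W : AddSubgroup (Fin n → ℤ)) (φ : V ≃+ W) :
    ℕ → (Fin n → ℤ) → (Fin n → ℤ) → Prop
  | 0, v, w => v = w
  | (k + 1), v, w => ∃ u, IntRel V W φ v u ∧ IntRelIter V W φ k u w



open Submodule Polynomial

section AuxiliaryLemmas

def embL (n : ℕ) : (Fin n → ℤ) →ₗ[ℤ] (Fin n → ℚ) where
  toFun := embQ n
  map_add' a b := by funext i; simp [embQ]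
  map_smul' z a := by funext i; simp [embQ]

lemma embQ_injective (n : ℕ) : Function.Injective (embQ n) := by
  intro a b h
  funext i
  have := congrFun h i
  simpa [embQ] using this

lemma embQ_zsmul (n : ℕ) (z : ℤ) (a : Fin n → ℤ) : embQ n (z • a) = z • embQ n a :=
  (embL n).map_smul z a

lemma embQ_add (n : ℕ) (a b : Fin n → ℤ) : embQ n (a + b) = embQ n a + embQ n b :=
  (embL n).map_add a b

lemma exists_clear_denoms {ι : Type*} (s : Finset ι) (g : ι → ℚ) :
    ∃ m : ℤ, 0 < m ∧ ∀ i ∈ s, ∃ z : ℤ, (z : ℚ) = m * g i := by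
  refine ⟨∏ i ∈ s, ((g i).den : ℤ), ?_, ?_⟩
  · exact Finset.prod_pos fun i _ => by exact_mod_cast (g i).den_pos
  · intro i hi
    obtain ⟨t, ht⟩ := Finset.dvd_prod_of_mem (fun i => ((g i).den : ℤ)) hi
    refine ⟨t * (g i).num, ?_⟩
    rw [ht]
    push_cast
    rw [mul_assoc, mul_comm ((g i).den : ℚ) ((t:ℚ) * g i), mul_assoc,
      mul_comm (g i) ((g i).den : ℚ), mul_comm ((g i).den:ℚ) (g i), Rat.mul_den_eq_num]

lemma embL_apply (n : ℕ) (x : Fin n → ℤ) : embL n x = embQ n x := rfl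

lemma embQ_zero (n : ℕ) : embQ n 0 = 0 := (embL n).map_zero

lemma li_embQ {n : ℕ} {ι : Type*} (v : ι → (Fin n → ℤ))
    (hv : LinearIndependent ℤ v) : LinearIndependent ℚ (fun i => embQ n (v i)) := by
  classical
  rw [linearIndependent_iff'] at hv ⊢
  intro s g hg i hi
  obtain ⟨m, hm, hden⟩ := exists_clear_denoms s g
  set zf : ι → ℤ := fun j => if h : j ∈ s then (hden j h).choose else 0 with hzf
  have hzspec : ∀ j ∈ s, ((zf j : ℚ)) = m * g j := by
    intro j hj; simp only [hzf, dif_pos hj]; exact (hden j hj).choose_spec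
  have hsum : ∑ j ∈ s, zf j • v j = 0 := by
    apply embQ_injective n
    rw [embQ_zero, ← embL_apply, map_sum]
    have : ∀ j ∈ s, embL n (zf j • v j) = ((m : ℚ) * g j) • embQ n (v j) := by
      intro j hj
      rw [map_smul, ← hzspec j hj, embL_apply, Int.cast_smul_eq_zsmul]
    rw [Finset.sum_congr rfl this]
    have : ∑ j ∈ s, ((m:ℚ) * g j) • embQ n (v j)
        = (m:ℚ) • ∑ j ∈ s, g j • embQ n (v j) := by
      rw [Finset.smul_sum]
      exact Finset.sum_congr rfl fun j _ => by rw [mul_smul]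
    rw [this, hg, smul_zero]
  have hz0 := hv s zf hsum i hi
  have : (m : ℚ) * g i = 0 := by rw [← hzspec i hi, hz0]; norm_num
  rcases mul_eq_zero.1 this with h | h
  · exact absurd h (by exact_mod_cast hm.ne')
  · exact h

lemma span_embQ_int_span {n : ℕ} (s : Set (Fin n → ℤ)) :
    span ℚ (embQ n '' ((span ℤ s : Submodule ℤ (Fin n → ℤ)) : Set (Fin n → ℤ)))
      = span ℚ (embQ n '' s) := by
  apply le_antisymm
  · rw [span_le]
    rintro _ ⟨u, hu, rfl⟩
    induction hu using Submodule.span_induction with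
    | mem u hu => exact subset_span ⟨u, hu, rfl⟩
    | zero => rw [embQ_zero]; exact zero_mem _
    | add a b _ _ ha hb => rw [embQ_add]; exact add_mem ha hb
    | smul z a _ ha =>
        rw [embQ_zsmul, ← Int.cast_smul_eq_zsmul ℚ]
        exact smul_mem _ _ ha
  · exact span_mono (Set.image_mono Submodule.subset_span)

lemma exists_int_smul_of_mem_span {n : ℕ} (U : Submodule ℤ (Fin n → ℤ)) {z : Fin n → ℚ}
    (hz : z ∈ span ℚ (embQ n '' (U : Set (Fin n → ℤ)))) :
    ∃ q : ℤ, 0 < q ∧ ∃ u ∈ U, embQ n u = q • z := by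
  induction hz using Submodule.span_induction with
  | mem z hz =>
      obtain ⟨u, hu, rfl⟩ := hz
      exact ⟨1, one_pos, u, hu, (one_smul ℤ _).symm⟩
  | zero => exact ⟨1, one_pos, 0, zero_mem _, by rw [embQ_zero, smul_zero]⟩
  | add a b _ _ ha hb =>
      obtain ⟨qa, hqa, ua, hua, ha2⟩ := ha
      obtain ⟨qb, hqb, ub, hub, hb2⟩ := hb
      refine ⟨qa * qb, mul_pos hqa hqb, qb • ua + qa • ub,
        add_mem (smul_mem _ _ hua) (smul_mem _ _ hub), ?_⟩
      rw [embQ_add, embQ_zsmul, embQ_zsmul, ha2, hb2, smul_add, smul_smul, smul_smul,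
        mul_comm qb qa]
  | smul c a _ ha =>
      obtain ⟨q, hq, u, hu, h2⟩ := ha
      refine ⟨q * (c.den : ℤ), mul_pos hq (by exact_mod_cast c.den_pos), c.num • u,
        smul_mem _ _ hu, ?_⟩
      rw [embQ_zsmul, h2, smul_smul, ← Int.cast_smul_eq_zsmul ℚ, ← Int.cast_smul_eq_zsmul ℚ,
        smul_smul]
      congr 1
      push_cast
      rw [mul_assoc, mul_comm (c.den : ℚ) c, Rat.mul_den_eq_num]
      ring

lemma monic_dvd_int {q : ℚ[X]} (hq : q.Monic) {Q : ℤ[X]} (hQ : Q.Monic)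
    (h : q ∣ Q.map (Int.castRingHom ℚ)) :
    ∃ P : ℤ[X], P.Monic ∧ P.map (Int.castRingHom ℚ) = q := by
  have h' : q ∣ Q.map (algebraMap ℤ ℚ) := by rwa [algebraMap_int_eq]
  obtain ⟨P, hP⟩ := IsIntegrallyClosed.eq_map_mul_C_of_dvd (K := ℚ) hQ h'
  rw [hq.leadingCoeff, map_one, mul_one] at hP
  refine ⟨P, ?_, by rwa [← algebraMap_int_eq]⟩
  have : (P.map (algebraMap ℤ ℚ)).Monic := hP ▸ hq
  exact Polynomial.monic_of_injective (by exact_mod_cast Int.cast_injective) this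

lemma exists_int_minpoly {ι : Type*} [Fintype ι] [DecidableEq ι] {Dm : Type*}
    [AddCommGroup Dm] [Module ℚ Dm] (cB : Module.Basis ι ℚ Dm) (S : Module.End ℚ Dm)
    (A : Matrix ι ι ℤ) (hA : LinearMap.toMatrix cB cB S = A.map Int.cast) :
    ∃ P : ℤ[X], P.Monic ∧ P.map (Int.castRingHom ℚ) = minpoly ℚ S := by
  have hmp : minpoly ℚ (LinearMap.toMatrix cB cB S) = minpoly ℚ S := by
    have h1 : (LinearMap.toMatrixAlgEquiv cB) S = LinearMap.toMatrix cB cB S := rfl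
    have := minpoly.algEquiv_eq (LinearMap.toMatrixAlgEquiv cB) S
    rwa [h1] at this
  set M : Matrix ι ι ℚ := A.map Int.cast with hM
  have haev : Polynomial.aeval M (A.charpoly.map (Int.castRingHom ℚ)) = 0 := by
    rw [← algebraMap_int_eq, Polynomial.aeval_map_algebraMap]
    have h0 : Polynomial.aeval A A.charpoly = 0 := Matrix.aeval_self_charpoly A
    have h2 := Polynomial.aeval_algHom_apply
      ((Int.castRingHom ℚ).mapMatrix.toIntAlgHom) A A.charpoly
    rw [h0, map_zero] at h2
    exact h2
  have hint : IsIntegral ℚ M := ⟨A.charpoly.map (Int.castRingHom ℚ),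
    A.charpoly_monic.map _, haev⟩
  have hdvd : minpoly ℚ M ∣ A.charpoly.map (Int.castRingHom ℚ) := minpoly.dvd ℚ M haev
  obtain ⟨P, hP1, hP2⟩ := monic_dvd_int (minpoly.monic hint) A.charpoly_monic hdvd
  exact ⟨P, hP1, by rw [hP2, ← hmp, hA]⟩

lemma iter_uniq {n : ℕ} (V W : AddSubgroup (Fin n → ℤ)) (φ : V ≃+ W) :
    ∀ (k : ℕ) (v v' t : Fin n → ℤ), IntRelIter V W φ k v t → IntRelIter V W φ k v' t → v = v' := by
  intro k
  induction k with
  | zero => intro v v' t h h'; exact h.trans h'.symm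
  | succ k ih =>
      rintro v v' t ⟨u, ⟨hv, hφ⟩, hrest⟩ ⟨u', ⟨hv', hφ'⟩, hrest'⟩
      have hu : u = u' := ih u u' t hrest hrest'
      have : (φ ⟨v, hv⟩ : W) = φ ⟨v', hv'⟩ := Subtype.ext (by rw [hφ, hφ', hu])
      have h2 : (⟨v, hv⟩ : V) = ⟨v', hv'⟩ := φ.injective this
      exact congrArg Subtype.val h2

theorem forward (n : ℕ) (V W : AddSubgroup (Fin n → ℤ)) (φ : V ≃+ W)
    (x : Fin n → ℤ) (p : ℤ) (hp : 0 < p)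
    (h : ∀ k : ℕ, ∃ w, IntRelIter V W φ k w (p • x)) :
    ∃ (D : Submodule ℚ (Fin n → ℚ)) (e : D ≃ₗ[ℚ] D),
        (D : Set (Fin n → ℚ)) ⊆ DSet V W φ ∧ embQ n x ∈ D ∧
        (∀ z : D, RelQ V W φ (z : Fin n → ℚ) ((e z : D) : Fin n → ℚ)) ∧
        ∃ P : Polynomial ℤ, P.Monic ∧
          P.map (Int.castRingHom ℚ) = minpoly ℚ (e.symm.toLinearMap : Module.End ℚ D) := by
  classical
  choose w hw using h
  have hw0 : w 0 = p • x := hw 0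
  have hstep : ∀ k : ℕ, ∃ hv : w (k + 1) ∈ V, ((φ ⟨w (k + 1), hv⟩ : W) : Fin n → ℤ) = w k := by
    intro k
    obtain ⟨u, ⟨hv, hφ⟩, hrest⟩ := hw (k + 1)
    have : u = w k := iter_uniq V W φ k u (w k) (p • x) hrest (hw k)
    exact ⟨hv, by rw [hφ, this]⟩
  choose hVm hφw using hstep
  have hWm : ∀ k, w k ∈ W := fun k => by rw [← hφw k]; exact (φ ⟨w (k + 1), hVm k⟩).2
  -- the subsets and subspaces
  set s : ℕ → Set (Fin n → ℤ) := fun k => {u | ∃ j, k ≤ j ∧ w j = u} with hs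
  set Dk : ℕ → Submodule ℚ (Fin n → ℚ) := fun k => span ℚ (embQ n '' s k) with hDk
  have hsmono : ∀ k, s (k + 1) ⊆ s k := by
    rintro k u ⟨j, hj, rfl⟩; exact ⟨j, by omega, rfl⟩
  have hDmono : ∀ k, Dk (k + 1) ≤ Dk k := fun k =>
    span_mono (Set.image_mono (hsmono k))
  -- choose the stabilization point
  set g : ℕ → ℕ := fun k => Module.finrank ℚ (Dk (k + 1)) with hg
  obtain ⟨K, hK⟩ : ∃ K, g K = sInf (Set.range g) :=
    Nat.sInf_mem (Set.range_nonempty g)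
  have hKmin : ∀ k, g K ≤ g k := fun k => hK ▸ Nat.sInf_le ⟨k, rfl⟩
  set κ : ℕ := K + 1 with hκ
  have hstab : Dk (κ + 1) = Dk κ :=
    Submodule.eq_of_le_of_finrank_le (hDmono κ) (hKmin (K + 1))
  -- the lattice
  set Λ : Submodule ℤ (Fin n → ℤ) := span ℤ (s κ) with hΛ
  have hsVW : ∀ k, 1 ≤ k → ∀ u ∈ s k, u ∈ V ⊓ W := by
    rintro k hk u ⟨j, hj, rfl⟩
    have h1 : 1 ≤ j := le_trans hk hj
    refine AddSubgroup.mem_inf.2 ⟨?_, hWm j⟩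
    have : j - 1 + 1 = j := by omega
    rw [← this]
    exact hVm (j - 1)
  have hΛVW : ∀ u ∈ Λ, u ∈ V ⊓ W := by
    intro u hu
    induction hu using Submodule.span_induction with
    | mem u hu => exact hsVW κ (by omega) u hu
    | zero => exact zero_mem _
    | add a b _ _ ha hb => exact add_mem ha hb
    | smul z a _ ha => exact zsmul_mem ha z
  have hWmem : ∀ u : Λ, (u : Fin n → ℤ) ∈ W := fun u =>
    (AddSubgroup.mem_inf.1 (hΛVW u u.2)).2
  have hVmem : ∀ u : Λ, (u : Fin n → ℤ) ∈ V := fun u =>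
    (AddSubgroup.mem_inf.1 (hΛVW u u.2)).1
  have hwΛ : ∀ j, κ ≤ j → w j ∈ Λ := fun j hj => subset_span ⟨j, hj, rfl⟩
  -- the inverse map on the lattice
  have hψmem : ∀ u : Λ, ((φ.symm ⟨(u : Fin n → ℤ), hWmem u⟩ : V) : Fin n → ℤ) ∈ Λ := by
    intro u
    have key : ∀ a ∈ Λ, ∀ ha : a ∈ W, ((φ.symm ⟨a, ha⟩ : V) : Fin n → ℤ) ∈ Λ := by
      intro a haΛ
      induction haΛ using Submodule.span_induction with
      | mem a ha =>
          intro haW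
          obtain ⟨j, hj, rfl⟩ := ha
          have h1 : (φ ⟨w (j + 1), hVm j⟩ : W) = ⟨w j, haW⟩ := Subtype.ext (hφw j)
          have h2 : φ.symm ⟨w j, haW⟩ = ⟨w (j + 1), hVm j⟩ := by
            rw [← h1, AddEquiv.symm_apply_apply]
          rw [h2]
          exact hwΛ (j + 1) (by omega)
      | zero =>
          intro h0W
          have h00 : (⟨(0 : Fin n → ℤ), h0W⟩ : W) = 0 := rfl
          have h01 : φ.symm (0 : W) = 0 := φ.symm.toAddMonoidHom.map_zero
          rw [h00, h01]
          exact zero_mem _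
      | add a b haΛ hbΛ ha hb =>
          intro habW
          have haW : a ∈ W := (AddSubgroup.mem_inf.1 (hΛVW a haΛ)).2
          have hbW : b ∈ W := (AddSubgroup.mem_inf.1 (hΛVW b hbΛ)).2
          have h00 : (⟨a + b, habW⟩ : W) = ⟨a, haW⟩ + ⟨b, hbW⟩ := rfl
          have h01 : φ.symm ((⟨a, haW⟩ : W) + ⟨b, hbW⟩)
              = φ.symm ⟨a, haW⟩ + φ.symm ⟨b, hbW⟩ := φ.symm.toAddMonoidHom.map_add _ _
          rw [h00, h01]
          exact add_mem (ha haW) (hb hbW)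
      | smul z a haΛ ha =>
          intro hzaW
          have haW : a ∈ W := (AddSubgroup.mem_inf.1 (hΛVW a haΛ)).2
          have h00 : (⟨z • a, hzaW⟩ : W) = z • ⟨a, haW⟩ := rfl
          have h01 : φ.symm (z • (⟨a, haW⟩ : W)) = z • φ.symm ⟨a, haW⟩ :=
            AddMonoidHom.map_zsmul φ.symm.toAddMonoidHom _ _
          rw [h00, h01]
          exact zsmul_mem (ha haW) z
    exact key u u.2 (hWmem u)
  set ψfun : Λ → Λ := fun u => ⟨(φ.symm ⟨(u : Fin n → ℤ), hWmem u⟩ : V), hψmem u⟩ with hψfun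
  have hψadd : ∀ a b : Λ, ψfun (a + b) = ψfun a + ψfun b := by
    intro a b
    apply Subtype.ext
    show ((φ.symm ⟨(↑(a + b) : Fin n → ℤ), _⟩ : V) : Fin n → ℤ) = _
    have h00 : (⟨(↑(a + b) : Fin n → ℤ), hWmem (a + b)⟩ : W) = ⟨↑a, hWmem a⟩ + ⟨↑b, hWmem b⟩ :=
      Subtype.ext rfl
    have h01 : φ.symm ((⟨↑a, hWmem a⟩ : W) + ⟨↑b, hWmem b⟩)
        = φ.symm ⟨↑a, hWmem a⟩ + φ.symm ⟨↑b, hWmem b⟩ := φ.symm.toAddMonoidHom.map_add _ _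
    rw [h00, h01]
    rfl
  set ψ : Λ →ₗ[ℤ] Λ := AddMonoidHom.toIntLinearMap (AddMonoidHom.mk' ψfun hψadd) with hψdef
  have hψw : ∀ j (hj : w j ∈ Λ), ((ψ ⟨w j, hj⟩ : Λ) : Fin n → ℤ) = w (j + 1) := by
    intro j hj
    show ((φ.symm ⟨w j, _⟩ : V) : Fin n → ℤ) = w (j + 1)
    have h1 : (φ ⟨w (j + 1), hVm j⟩ : W) = ⟨w j, hWmem ⟨w j, hj⟩⟩ := Subtype.ext (hφw j)
    rw [← h1, AddEquiv.symm_apply_apply]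
  have hψinj : Function.Injective ψ := by
    intro a b hab
    have h1v' : ((ψ a : Λ) : Fin n → ℤ) = ((ψ b : Λ) : Fin n → ℤ) :=
      congrArg (Subtype.val : Λ → (Fin n → ℤ)) hab
    have h1v : ((φ.symm ⟨(a : Fin n → ℤ), hWmem a⟩ : V) : Fin n → ℤ)
        = ((φ.symm ⟨(b : Fin n → ℤ), hWmem b⟩ : V) : Fin n → ℤ) := h1v'
    have h2 : (⟨(a : Fin n → ℤ), hWmem a⟩ : W) = ⟨(b : Fin n → ℤ), hWmem b⟩ :=
      φ.symm.injective (Subtype.ext h1v)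
    have h3 : (a : Fin n → ℤ) = (b : Fin n → ℤ) :=
      congrArg (Subtype.val : W → (Fin n → ℤ)) h2
    exact Subtype.ext h3
  -- basis of the lattice
  haveI : Module.Finite ℤ Λ := Module.Finite.iff_fg.2 (IsNoetherian.noetherian Λ)
  set ι := Module.Free.ChooseBasisIndex ℤ Λ with hι
  set b : Module.Basis ι ℤ Λ := Module.Free.chooseBasis ℤ Λ with hb
  set c : ι → (Fin n → ℚ) := fun i => embQ n ((b i : Λ) : Fin n → ℤ) with hc
  have hlibz : LinearIndependent ℤ (fun i => ((b i : Λ) : Fin n → ℤ)) := by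
    have := b.linearIndependent
    have h2 := this.map' Λ.subtype (Submodule.ker_subtype Λ)
    exact h2
  have hli : LinearIndependent ℚ c := li_embQ _ hlibz
  set D : Submodule ℚ (Fin n → ℚ) := span ℚ (Set.range c) with hD
  set cB : Module.Basis ι ℚ D := Module.Basis.span hli with hcB
  -- identification of D
  have hrange : Set.range c = embQ n '' Set.range (fun i => ((b i : Λ) : Fin n → ℤ)) := by
    rw [← Set.range_comp]; rfl
  have hbspan : span ℤ (Set.range (fun i => ((b i : Λ) : Fin n → ℤ))) = Λ := by
    have h1 : Set.range (fun i => ((b i : Λ) : Fin n → ℤ))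
        = Λ.subtype '' Set.range b := by rw [← Set.range_comp]; rfl
    rw [h1, ← Submodule.map_span, b.span_eq, Submodule.map_subtype_top]
  have hDΛ : D = span ℚ (embQ n '' (Λ : Set (Fin n → ℤ))) := by
    rw [hD, hrange, ← span_embQ_int_span, hbspan]
  have hDκ : D = Dk κ := by
    rw [hDΛ, hΛ, span_embQ_int_span]
  -- the inclusion of the lattice in D
  have hjDmem : ∀ u : Λ, embQ n (u : Fin n → ℤ) ∈ D := by
    intro u
    rw [hDΛ]
    exact subset_span ⟨u, u.2, rfl⟩
  set jDfun : Λ → D := fun u => ⟨embQ n (u : Fin n → ℤ), hjDmem u⟩ with hjDfun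
  have hjDadd : ∀ a b' : Λ, jDfun (a + b') = jDfun a + jDfun b' := by
    intro a b'
    apply Subtype.ext
    show embQ n ((a : Fin n → ℤ) + b') = embQ n a + embQ n b'
    exact embQ_add n _ _
  set jD : Λ →ₗ[ℤ] D := AddMonoidHom.toIntLinearMap (AddMonoidHom.mk' jDfun hjDadd) with hjD
  have hjDapply : ∀ u : Λ, ((jD u : D) : Fin n → ℚ) = embQ n (u : Fin n → ℤ) := fun u => rfl
  have hjDb : ∀ i : ι, jD (b i) = cB i := by
    intro i
    apply Subtype.ext
    rw [hjDapply]
    rw [hcB, Module.Basis.span_apply]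
  -- the linear map F
  set F : D →ₗ[ℚ] (Fin n → ℚ) := Module.Basis.constr cB ℚ (fun i => embQ n ((ψ (b i) : Λ) : Fin n → ℤ))
    with hF
  have hFA : ∀ u : Λ, F (jD u) = embQ n ((ψ u : Λ) : Fin n → ℤ) := by
    intro u
    have hmaps : (F.restrictScalars ℤ).comp jD
        = ((embL n).comp Λ.subtype).comp ψ := by
      apply b.ext
      intro i
      show F (jD (b i)) = embL n ((ψ (b i) : Λ) : Fin n → ℤ)
      rw [hjDb i, embL_apply, hF, Module.Basis.constr_basis]
    have := congrArg (fun (T : Λ →ₗ[ℤ] (Fin n → ℚ)) => T u) hmaps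
    simpa [embL_apply] using this
  -- F maps into D
  have hFD : ∀ z : D, F z ∈ D := by
    intro z
    have htop : (⊤ : Submodule ℚ D) ≤ Submodule.comap F D := by
      rw [← cB.span_eq, span_le]
      rintro _ ⟨i, rfl⟩
      show F (cB i) ∈ D
      rw [hF, Module.Basis.constr_basis]
      exact hjDmem (ψ (b i))
    exact htop trivial
  set eS : D →ₗ[ℚ] D := LinearMap.codRestrict D F hFD with heS
  have heSapply : ∀ z : D, ((eS z : D) : Fin n → ℚ) = F z := fun z => rfl
  have heSjD : ∀ u : Λ, eS (jD u) = jD (ψ u) := by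
    intro u
    apply Subtype.ext
    rw [heSapply, hFA u, hjDapply]
  -- injectivity
  have hliv : LinearIndependent ℚ (fun i => embQ n ((ψ (b i) : Λ) : Fin n → ℤ)) := by
    apply li_embQ
    have h1 : LinearIndependent ℤ (fun i => ψ (b i)) := by
      have hker : LinearMap.ker ψ = ⊥ := LinearMap.ker_eq_bot.2 hψinj
      exact b.linearIndependent.map' ψ hker
    exact h1.map' Λ.subtype (Submodule.ker_subtype Λ)
  have heSinj : Function.Injective eS := by
    have hFinj : Function.Injective F := by
      intro z z' hzz
      have hrepr : ∀ z : D, F z = ∑ i, (cB.repr z) i • embQ n ((ψ (b i) : Λ) : Fin n → ℤ) := by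
        intro z
        conv_lhs => rw [← Module.Basis.sum_repr cB z]
        rw [map_sum]
        exact Finset.sum_congr rfl fun i _ => by rw [map_smul, hF, Module.Basis.constr_basis]
      have h0 : ∑ i, ((cB.repr z) i - (cB.repr z') i) • embQ n ((ψ (b i) : Λ) : Fin n → ℤ)
          = 0 := by
        have hsub : ∑ i, (cB.repr z) i • embQ n ((ψ (b i) : Λ) : Fin n → ℤ)
            - ∑ i, (cB.repr z') i • embQ n ((ψ (b i) : Λ) : Fin n → ℤ) = 0 := by
          rw [← hrepr z, ← hrepr z', hzz, sub_self]
        rw [← Finset.sum_sub_distrib] at hsub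
        rw [← hsub]
        exact Finset.sum_congr rfl fun i _ => by rw [sub_smul]
      have hz0 := (Fintype.linearIndependent_iff.1 hliv) _ h0
      apply cB.repr.injective
      ext i
      have := hz0 i
      exact sub_eq_zero.1 this
    intro z z' hzz
    apply hFinj
    exact congrArg (fun t : D => (t : Fin n → ℚ)) hzz
  -- surjectivity
  have hwD : ∀ j, κ ≤ j → embQ n (w j) ∈ D := by
    intro j hj
    exact hjDmem ⟨w j, hwΛ j hj⟩
  have hmapeq : Submodule.map D.subtype (LinearMap.range eS) = D := by
    apply le_antisymm
    · rintro _ ⟨z, ⟨z', rfl⟩, rfl⟩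
      exact (eS z').2
    · have hle : Dk (κ + 1) ≤ Submodule.map D.subtype (LinearMap.range eS) := by
        rw [hDk]
        rw [span_le]
        rintro _ ⟨u, ⟨j, hj, rfl⟩, rfl⟩
        have hj1 : κ ≤ j - 1 := by omega
        have hjeq : j - 1 + 1 = j := by omega
        refine ⟨jD (ψ ⟨w (j - 1), hwΛ _ hj1⟩), ⟨jD ⟨w (j - 1), hwΛ _ hj1⟩, heSjD _⟩, ?_⟩
        show ((jD (ψ ⟨w (j - 1), hwΛ _ hj1⟩) : D) : Fin n → ℚ) = embQ n (w j)
        rw [hjDapply, hψw (j - 1) (hwΛ _ hj1), hjeq]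
      intro z hz
      exact hle (by rw [hstab, ← hDκ]; exact hz)
  have heSsurj : Function.Surjective eS := by
    have h1 : LinearMap.range eS = ⊤ := by
      have hinj : Function.Injective D.subtype := Subtype.val_injective
      apply Submodule.map_injective_of_injective hinj
      rw [hmapeq, Submodule.map_subtype_top]
    exact LinearMap.range_eq_top.1 h1
  set eqv : D ≃ₗ[ℚ] D := LinearEquiv.ofBijective eS ⟨heSinj, heSsurj⟩ with heqv
  have heqvapply : ∀ z : D, eqv z = eS z := fun z => rfl
  -- RelQ property
  have hRelQ : ∀ z : D, RelQ V W φ (z : Fin n → ℚ) ((eqv.symm z : D) : Fin n → ℚ) := by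
    intro z
    set y : D := eqv.symm z with hyz
    have hey : eS y = z := by
      have h1 : eqv y = z := eqv.apply_symm_apply z
      rw [← heqvapply y]
      exact h1
    have hymem : (y : Fin n → ℚ) ∈ span ℚ (embQ n '' (Λ : Set (Fin n → ℤ))) := by
      rw [← hDΛ]; exact y.2
    obtain ⟨q, hq, u, huΛ, hu2⟩ := exists_int_smul_of_mem_span Λ hymem
    set u' : Λ := ⟨u, huΛ⟩ with hu'
    have hjDu : jD u' = ((q : ℚ)) • y := by
      apply Subtype.ext
      rw [hjDapply]
      show embQ n u = ((q : ℚ) • y : D).1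
      rw [SetLike.val_smul, Int.cast_smul_eq_zsmul]
      exact hu2
    have h3 : eS (jD u') = (q : ℚ) • z := by rw [hjDu, map_smul, hey]
    have h4 : embQ n ((ψ u' : Λ) : Fin n → ℤ) = (q : ℚ) • (z : Fin n → ℚ) := by
      have l1 : embQ n ((ψ u' : Λ) : Fin n → ℤ) = ((eS (jD u') : D) : Fin n → ℚ) := by
        rw [heSjD, hjDapply]
      rw [l1, h3, SetLike.val_smul]
    refine ⟨q, hq.ne', ⟨((ψ u' : Λ) : Fin n → ℤ), hVmem (ψ u')⟩, ?_, ?_⟩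
    · rw [h4, Int.cast_smul_eq_zsmul]
    · have h6 : (⟨((ψ u' : Λ) : Fin n → ℤ), hVmem (ψ u')⟩ : V) = φ.symm ⟨u, hWmem u'⟩ :=
        Subtype.ext rfl
      have h7 : φ (⟨((ψ u' : Λ) : Fin n → ℤ), hVmem (ψ u')⟩ : V) = ⟨u, hWmem u'⟩ := by
        rw [h6, AddEquiv.apply_symm_apply]
      rw [h7]
      show embQ n u = q • (y : Fin n → ℚ)
      exact hu2
  -- D is contained in DSet
  have hDle : D ≤ qSpan n (V ⊓ W) := by
    rw [hDκ]
    show span ℚ (embQ n '' s κ) ≤ span ℚ (embQ n '' ((V ⊓ W : AddSubgroup (Fin n → ℤ)) : Set (Fin n → ℤ)))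
    exact span_mono (Set.image_mono (fun u hu => hsVW κ (by omega) u hu))
  have hDsub : (D : Set (Fin n → ℚ)) ⊆ DSet V W φ := by
    intro z0 hz0
    set zD : D := ⟨z0, hz0⟩ with hzD
    refine ⟨fun k => (((eS ^ k) zD : D) : Fin n → ℚ), rfl, ?_, ?_⟩
    · intro k
      exact hDle ((eS ^ k) zD).2
    · intro k
      have hpow : (eS ^ (k + 1)) zD = eS ((eS ^ k) zD) := by rw [pow_succ']; rfl
      have h2 : eqv.symm ((eS ^ (k + 1)) zD) = (eS ^ k) zD := by
        apply eqv.injective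
        rw [eqv.apply_symm_apply, hpow]
        exact (heqvapply _).symm
      have h3 := hRelQ ((eS ^ (k + 1)) zD)
      rw [h2] at h3
      exact h3
  -- downward closure: embQ x ∈ D
  have hdown : ∀ j, embQ n (w (j + 1)) ∈ D → embQ n (w j) ∈ D := by
    intro j hj1
    obtain ⟨zD, hzD⟩ := heSsurj ⟨embQ n (w (j + 1)), hj1⟩
    have hzmem : (zD : Fin n → ℚ) ∈ span ℚ (embQ n '' (Λ : Set (Fin n → ℤ))) := by
      rw [← hDΛ]; exact zD.2
    obtain ⟨q, hq, u, huΛ, hu2⟩ := exists_int_smul_of_mem_span Λ hzmem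
    set u' : Λ := ⟨u, huΛ⟩ with hu'
    have hjDu : jD u' = ((q : ℚ)) • zD := by
      apply Subtype.ext
      rw [hjDapply]
      show embQ n u = ((q : ℚ) • zD : D).1
      rw [SetLike.val_smul, Int.cast_smul_eq_zsmul]
      exact hu2
    have h3 : eS (jD u') = (q : ℚ) • (⟨embQ n (w (j + 1)), hj1⟩ : D) := by
      rw [hjDu, map_smul, hzD]
    have h4 : embQ n ((ψ u' : Λ) : Fin n → ℤ) = embQ n (q • w (j + 1)) := by
      have l1 : embQ n ((ψ u' : Λ) : Fin n → ℤ) = ((eS (jD u') : D) : Fin n → ℚ) := by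
        rw [heSjD, hjDapply]
      rw [l1, h3, SetLike.val_smul, embQ_zsmul, Int.cast_smul_eq_zsmul]
    have h5 : ((ψ u' : Λ) : Fin n → ℤ) = q • w (j + 1) := embQ_injective n h4
    have h6 : (⟨((ψ u' : Λ) : Fin n → ℤ), hVmem (ψ u')⟩ : V) = φ.symm ⟨u, hWmem u'⟩ :=
      Subtype.ext rfl
    have h7 : φ (⟨((ψ u' : Λ) : Fin n → ℤ), hVmem (ψ u')⟩ : V) = ⟨u, hWmem u'⟩ := by
      rw [h6, AddEquiv.apply_symm_apply]
    have h8 : (⟨((ψ u' : Λ) : Fin n → ℤ), hVmem (ψ u')⟩ : V) = q • ⟨w (j + 1), hVm j⟩ := by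
      apply Subtype.ext
      rw [h5]
      rfl
    have h9 : (⟨u, hWmem u'⟩ : W) = q • φ ⟨w (j + 1), hVm j⟩ := by
      rw [← h7, h8]
      exact AddMonoidHom.map_zsmul φ.toAddMonoidHom _ _
    have h10 : u = q • w j := by
      have h11 := congrArg (Subtype.val : W → (Fin n → ℤ)) h9
      have h12 : ((q • φ ⟨w (j + 1), hVm j⟩ : W) : Fin n → ℤ)
          = q • ((φ ⟨w (j + 1), hVm j⟩ : W) : Fin n → ℤ) := rfl
      rw [h12, hφw j] at h11
      exact h11
    have h13 : embQ n (w j) = (zD : Fin n → ℚ) := by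
      apply smul_right_injective (Fin n → ℚ) hq.ne'
      show q • embQ n (w j) = q • (zD : Fin n → ℚ)
      rw [← embQ_zsmul, ← h10, hu2]
    rw [h13]
    exact zD.2
  have hwallD : ∀ t, embQ n (w (κ - t)) ∈ D := by
    intro t
    induction t with
    | zero => exact hwD κ le_rfl
    | succ t ih =>
        by_cases h : κ - t = 0
        · have h1 : κ - (t + 1) = 0 := by omega
          rw [h1]
          rw [h] at ih
          exact ih
        · have hm : κ - t = (κ - (t + 1)) + 1 := by omega
          apply hdown (κ - (t + 1))
          rw [← hm]
          exact ih
  have hxD : embQ n x ∈ D := by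
    have h1 : embQ n (p • x) ∈ D := by
      rw [← hw0]
      have := hwallD κ
      rwa [Nat.sub_self] at this
    rw [embQ_zsmul, ← Int.cast_smul_eq_zsmul ℚ] at h1
    have h2 := D.smul_mem ((p : ℚ)⁻¹) h1
    rw [← mul_smul, inv_mul_cancel₀ (show (p : ℚ) ≠ 0 by exact_mod_cast hp.ne'), one_smul] at h2
    exact h2
  -- the integer matrix
  haveI : DecidableEq ι := Classical.decEq ι
  have hreprInt : ∀ u : Λ, ∀ i : ι, (cB.repr (jD u)) i = (((b.repr u) i : ℤ) : ℚ) := by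
    intro u i
    have hmaps : ((cB.coord i).restrictScalars ℤ).comp jD
        = AddMonoidHom.toIntLinearMap ((Int.castRingHom ℚ).toAddMonoidHom.comp
            ((b.coord i).toAddMonoidHom)) := by
      apply b.ext
      intro j
      show cB.coord i (jD (b j)) = (((b.coord i) (b j) : ℤ) : ℚ)
      rw [hjDb j]
      rw [Module.Basis.coord_apply, Module.Basis.coord_apply, Module.Basis.repr_self, Module.Basis.repr_self]
      rw [Finsupp.single_apply, Finsupp.single_apply]
      split_ifs <;> simp
    have := congrArg (fun (T : Λ →ₗ[ℤ] ℚ) => T u) hmaps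
    simpa using this
  set A : Matrix ι ι ℤ := Matrix.of (fun i j => (b.repr (ψ (b j))) i) with hA
  have hAmat : LinearMap.toMatrix cB cB eS = A.map Int.cast := by
    ext i j
    rw [LinearMap.toMatrix_apply]
    rw [show eS (cB j) = jD (ψ (b j)) from by rw [← hjDb j, heSjD]]
    rw [hreprInt (ψ (b j)) i]
    rfl
  obtain ⟨P, hP1, hP2⟩ := exists_int_minpoly cB eS A hAmat
  refine ⟨D, eqv.symm, hDsub, hxD, hRelQ, ⟨P, hP1, ?_⟩⟩
  have hfin : ((eqv.symm).symm.toLinearMap : Module.End ℚ D) = eS := rfl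
  rw [hfin]
  exact hP2
theorem backward (n : ℕ) (V W : AddSubgroup (Fin n → ℤ)) (φ : V ≃+ W)
    (x : Fin n → ℤ) (D : Submodule ℚ (Fin n → ℚ)) (e : D ≃ₗ[ℚ] D)
    (hsub : (D : Set (Fin n → ℚ)) ⊆ DSet V W φ) (hx : embQ n x ∈ D)
    (hrel : ∀ z : D, RelQ V W φ (z : Fin n → ℚ) ((e z : D) : Fin n → ℚ))
    (P : Polynomial ℤ) (hPm : P.Monic)
    (hP : P.map (Int.castRingHom ℚ) = minpoly ℚ (e.symm.toLinearMap : Module.End ℚ D)) :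
    ∃ p : ℤ, 0 < p ∧ ∀ k : ℕ, ∃ w, IntRelIter V W φ k w (p • x) := by
  classical
  set S : Module.End ℚ D := e.symm.toLinearMap with hS
  set z0 : D := ⟨embQ n x, hx⟩ with hz0
  set y : ℕ → (Fin n → ℚ) := fun k => ((S ^ k) z0 : Fin n → ℚ) with hy
  set d : ℕ := P.natDegree with hd
  -- the U submodule
  set U : Submodule ℤ (Fin n → ℤ) := AddSubgroup.toIntSubmodule (V ⊓ W) with hU
  have hUc : (U : Set (Fin n → ℤ)) = ((V ⊓ W : AddSubgroup (Fin n → ℤ)) : Set (Fin n → ℤ)) := rfl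
  have hDq : ∀ z : D, (z : Fin n → ℚ) ∈ span ℚ (embQ n '' (U : Set (Fin n → ℤ))) := by
    intro z
    obtain ⟨xs, h0, hmem, -⟩ := hsub z.2
    have := hmem 0
    rw [h0] at this
    rw [hUc]
    exact this
  -- recurrence for S
  have hrec : ∀ z : D, (S ^ d) z = ∑ i ∈ Finset.range d, (-(P.coeff i : ℚ)) • (S ^ i) z := by
    intro z
    have h0 : Polynomial.aeval S (P.map (Int.castRingHom ℚ)) = 0 := by
      rw [hP]; exact minpoly.aeval ℚ S
    rw [Polynomial.aeval_eq_sum_range] at h0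
    rw [hPm.natDegree_map (Int.castRingHom ℚ), Finset.sum_range_succ] at h0
    have hc : (P.map (Int.castRingHom ℚ)).coeff d = 1 := by
      rw [Polynomial.coeff_map]
      have : P.coeff d = 1 := hPm
      rw [this]; norm_num
    rw [hc, one_smul] at h0
    have h1 : (S ^ d) = -∑ i ∈ Finset.range d, (P.map (Int.castRingHom ℚ)).coeff i • S ^ i :=
      by rw [← hd] at h0; exact eq_neg_of_add_eq_zero_right (α := Module.End ℚ D) h0
    have h2 := congrArg (fun (T : Module.End ℚ D) => T z) h1
    simp only [LinearMap.neg_apply, LinearMap.sum_apply, LinearMap.smul_apply] at h2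
    rw [h2, ← Finset.sum_neg_distrib]
    exact Finset.sum_congr rfl fun i _ => by
      rw [Polynomial.coeff_map]
      exact (neg_smul _ _).symm
  have hyrec : ∀ m : ℕ, y (m + d) = ∑ i ∈ Finset.range d, (-(P.coeff i : ℚ)) • y (m + i) := by
    intro m
    have h1 : (S ^ (m + d)) z0 = (S ^ d) ((S ^ m) z0) := by
      rw [add_comm, pow_add]; rfl
    have h2 := hrec ((S ^ m) z0)
    have h3 : ∀ i, (S ^ i) ((S ^ m) z0) = (S ^ (m + i)) z0 := by
      intro i; rw [add_comm, pow_add]; rfl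
    calc y (m + d) = (((S ^ d) ((S ^ m) z0) : D) : Fin n → ℚ) := by rw [hy]; exact congrArg _ h1
      _ = ((∑ i ∈ Finset.range d, (-(P.coeff i : ℚ)) • (S ^ i) ((S ^ m) z0) : D) : Fin n → ℚ) := by
          rw [h2]
      _ = ∑ i ∈ Finset.range d, (-(P.coeff i : ℚ)) • y (m + i) := by
          rw [Submodule.coe_sum]
          exact Finset.sum_congr rfl fun i _ => by
            rw [SetLike.val_smul, h3 i]
  -- clearing denominators
  have hcl : ∀ j : ℕ, ∃ q : ℤ, 0 < q ∧ ∃ u ∈ U, embQ n u = q • y j := by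
    intro j
    exact exists_int_smul_of_mem_span U (hDq ((S ^ j) z0))
  choose qf hq hcl2 using hcl
  choose uf huU hufq using hcl2
  set p : ℤ := ∏ j ∈ Finset.range d, qf j with hp
  have hp0 : 0 < p := Finset.prod_pos fun j _ => hq j
  -- main claim
  have claim : ∀ k : ℕ, ∃ u ∈ U, embQ n u = p • y k := by
    intro k
    induction k using Nat.strong_induction_on with
    | _ k ih =>
      by_cases hk : k < d
      · obtain ⟨t, ht⟩ := Finset.dvd_prod_of_mem qf (Finset.mem_range.2 hk)
        refine ⟨t • uf k, Submodule.smul_mem _ _ (huU k), ?_⟩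
        rw [embQ_zsmul, hufq k, smul_smul, mul_comm t (qf k), ← ht]
      · push_neg at hk
        set m : ℕ := k - d with hm
        have hmd : m + d = k := Nat.sub_add_cancel hk
        have hlt : ∀ i ∈ Finset.range d, m + i < k := by
          intro i hi
          have : i < d := Finset.mem_range.1 hi
          omega
        have hChoice : ∀ i ∈ Finset.range d, ∃ u ∈ U, embQ n u = p • y (m + i) :=
          fun i hi => ih (m + i) (hlt i hi)
        choose! w hwU hwq using hChoice
        refine ⟨∑ i ∈ Finset.range d, (-(P.coeff i)) • w i,
          Submodule.sum_mem _ fun i hi => Submodule.smul_mem _ _ (hwU i hi), ?_⟩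
        rw [← embL_apply, map_sum]
        have : ∀ i ∈ Finset.range d, embL n ((-(P.coeff i)) • w i)
            = p • ((-(P.coeff i : ℚ)) • y (m + i)) := by
          intro i hi
          rw [map_smul, embL_apply, hwq i hi, smul_comm,
            show (-(P.coeff i : ℚ)) = ((-(P.coeff i) : ℤ) : ℚ) by push_cast; ring,
            Int.cast_smul_eq_zsmul]
        rw [Finset.sum_congr rfl this, ← Finset.smul_sum, ← hyrec m, hmd]
  choose v hvU hvq using claim
  -- chain property
  have hVmem : ∀ k, v k ∈ V := fun k => (AddSubgroup.mem_inf.1 (hvU k)).1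
  have hchain : ∀ k : ℕ, ((φ ⟨v (k + 1), hVmem (k + 1)⟩ : W) : Fin n → ℤ) = v k := by
    intro k
    have hez : e ((S ^ (k + 1)) z0) = (S ^ k) z0 := by
      have : (S ^ (k + 1)) z0 = e.symm ((S ^ k) z0) := by
        rw [pow_succ']; rfl
      rw [this, e.apply_symm_apply]
    obtain ⟨q, hq0, v', h1, h2⟩ := hrel ((S ^ (k + 1)) z0)
    rw [hez] at h2
    -- h1 : embQ ↑v' = q • y (k+1), h2 : embQ ↑(φ v') = q • y k
    have key1 : q • v (k + 1) = p • (v' : Fin n → ℤ) := by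
      apply embQ_injective n
      rw [embQ_zsmul, embQ_zsmul, hvq, h1, smul_comm]
    have key2 : (q • (⟨v (k + 1), hVmem (k + 1)⟩ : V)) = p • v' := by
      apply Subtype.ext
      exact key1
    have key3 : q • ((φ ⟨v (k + 1), hVmem (k + 1)⟩ : W) : Fin n → ℤ)
        = p • ((φ v' : W) : Fin n → ℤ) := by
      have h5 := congrArg φ key2
      have h6 : φ (q • (⟨v (k + 1), hVmem (k + 1)⟩ : V)) = q • φ ⟨v (k + 1), hVmem (k + 1)⟩ :=
        AddMonoidHom.map_zsmul φ.toAddMonoidHom _ _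
      have h7 : φ (p • v') = p • φ v' := AddMonoidHom.map_zsmul φ.toAddMonoidHom _ _
      rw [h6, h7] at h5
      exact congrArg (fun w : W => (w : Fin n → ℤ)) h5
    have key4 : p • ((φ v' : W) : Fin n → ℤ) = q • v k := by
      apply embQ_injective n
      rw [embQ_zsmul, embQ_zsmul, h2, hvq, smul_comm]
    rw [key4] at key3
    exact smul_right_injective (Fin n → ℤ) hq0 key3
  have hiter : ∀ k : ℕ, IntRelIter V W φ k (v k) (p • x) := by
    intro k
    induction k with
    | zero =>
        show v 0 = p • x
        apply embQ_injective n
        have h00 : y 0 = embQ n x := by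
          show ((S ^ 0) z0 : Fin n → ℚ) = embQ n x
          rw [pow_zero]
          rfl
        rw [embQ_zsmul, hvq 0, h00]
    | succ k ih =>
        exact ⟨v k, ⟨hVmem (k + 1), hchain k⟩, ih⟩
  exact ⟨p, hp0, fun k => ⟨v k, hiter k⟩⟩

end AuxiliaryLemmas

/-- Proposition 7.1(6): for `x ∈ M`, there is a positive integer `p` such that every
backward iterate `φ^{-k}` is defined at `p • x` (i.e. `p • x ∈ W_k` for all `k`) if and
only if there is a `ℚ`-subspace `D_x ⊆ D_φ` containing the image of `x`, invariant under
`φ̃` (with `φ̃ (D_x) = D_x`), such that the minimal polynomial of the restriction of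
`φ̃^{-1}` to `D_x` is a monic polynomial with integer coefficients. -/
theorem statement6 (n : ℕ) (V W : AddSubgroup (Fin n → ℤ)) (φ : V ≃+ W)
    (x : Fin n → ℤ) :
    (∃ p : ℤ, 0 < p ∧ ∀ k : ℕ, ∃ w, IntRelIter V W φ k w (p • x)) ↔
      (∃ (D : Submodule ℚ (Fin n → ℚ)) (e : D ≃ₗ[ℚ] D),
        (D : Set (Fin n → ℚ)) ⊆ DSet V W φ ∧ embQ n x ∈ D ∧
        (∀ z : D, RelQ V W φ (z : Fin n → ℚ) ((e z : D) : Fin n → ℚ)) ∧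
        ∃ P : Polynomial ℤ, P.Monic ∧
          P.map (Int.castRingHom ℚ) = minpoly ℚ (e.symm.toLinearMap : Module.End ℚ D)) := by
  constructor
  · rintro ⟨p, hp, h⟩
    exact forward n V W φ x p hp h
  · rintro ⟨D, e, h1, h2, h3, P, h4, h5⟩
    exact backward n V W φ x D e h1 h2 h3 P h4 h5
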